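/- Let T be the bounded operator on ℓ²(ℕ × ℕ; ℂ) determined by (T f)(p, q) = 0 if p = 0 and (T f)(p, q) = f(p − 1, q + 1) if p ≥ 1 (equivalently, T sends the standard basis vector e_{(m,n)} to e_{(m+1, n−1)} when n ≥ 1 and to 0 when n = 0; this realizes S ⊗ S*, the tensor product of the unilateral shift with its adjoint). Then T is a complex symmetric operator: there exists a conjugation C on ℓ²(ℕ × ℕ; ℂ) with T = C ∘ T* ∘ C. -/

import Mathlib

open ContinuousLinearMap

/-- A conjugation on a complex Hilbert space: a conjugate-linear, isometric involution. -/
def IsConjugation {H : Type*} [NormedAddCommGroup H] [InnerProductSpace ℂ H]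
    (C : H → H) : Prop :=
  (∀ (a : ℂ) (x y : H), C (a • x + y) = (starRingEnd ℂ a) • C x + C y) ∧
  (∀ x, ‖C x‖ = ‖x‖) ∧
  (∀ x, C (C x) = x)

noncomputable section

open scoped ComplexConjugate ENNReal

private abbrev H2 := lp (fun _ : ℕ × ℕ => ℂ) 2

private lemma memC (f : H2) : Memℓp (fun x : ℕ × ℕ => conj (f x.swap)) 2 := by
  apply memℓp_gen
  have h := (lp.memℓp f).summable (p := 2) (by norm_num)
  have : Summable fun x : ℕ × ℕ => ‖f x.swap‖ ^ (2 : ℝ≥0∞).toReal :=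
    ((Equiv.prodComm ℕ ℕ).summable_iff).2 h
  simpa [RCLike.norm_conj] using this

private def Cmap (f : H2) : H2 := ⟨fun x : ℕ × ℕ => conj (f x.swap), memC f⟩

@[simp] private lemma Cmap_apply (f : H2) (x : ℕ × ℕ) : Cmap f x = conj (f x.swap) := rfl

private lemma Cmap_norm (f : H2) : ‖Cmap f‖ = ‖f‖ := by
  have h2 : (0:ℝ) < (2 : ℝ≥0∞).toReal := by norm_num
  have hC := lp.norm_rpow_eq_tsum h2 (Cmap f)
  have hf := lp.norm_rpow_eq_tsum h2 f
  have hsum : (∑' x : ℕ × ℕ, ‖Cmap f x‖ ^ (2 : ℝ≥0∞).toReal)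
      = ∑' x : ℕ × ℕ, ‖f x‖ ^ (2 : ℝ≥0∞).toReal := by
    rw [← (Equiv.prodComm ℕ ℕ).tsum_eq (fun x => ‖f x‖ ^ (2 : ℝ≥0∞).toReal)]
    simp only [Cmap_apply, RCLike.norm_conj]
    rfl
  have : ‖Cmap f‖ ^ (2 : ℝ≥0∞).toReal = ‖f‖ ^ (2 : ℝ≥0∞).toReal := by
    rw [hC, hf, hsum]
  exact Real.rpow_left_injOn (ne_of_gt h2) (norm_nonneg _) (norm_nonneg _) this

private lemma Cmap_invol (f : H2) : Cmap (Cmap f) = f := by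
  apply lp.ext; funext z; simp

private lemma single_zero (T : H2 →L[ℂ] H2)
    (hT : ∀ (f : H2) (p q : ℕ), T f (p, q) = if p = 0 then 0 else f (p - 1, q + 1))
    (p : ℕ) : T (lp.single 2 (p, 0) (1:ℂ)) = 0 := by
  apply lp.ext; funext x
  obtain ⟨a, b⟩ := x
  rw [hT]
  rcases a with _ | a
  · simp
  · simp [lp.single_apply, Prod.ext_iff]

private lemma single_succ (T : H2 →L[ℂ] H2)
    (hT : ∀ (f : H2) (p q : ℕ), T f (p, q) = if p = 0 then 0 else f (p - 1, q + 1))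
    (p q : ℕ) : T (lp.single 2 (p, q+1) (1:ℂ)) = lp.single 2 (p+1, q) (1:ℂ) := by
  apply lp.ext; funext x
  obtain ⟨a, b⟩ := x
  rw [hT]
  rcases a with _ | a
  · simp [lp.single_apply, Prod.ext_iff]
  · simp only [Nat.succ_ne_zero, if_false, lp.single_apply, Nat.succ_sub_one]
    by_cases h : a = p ∧ b = q
    · obtain ⟨rfl, rfl⟩ := h; simp
    · rw [Pi.single_apply, Pi.single_apply, if_neg, if_neg]
      · simp only [Prod.mk.injEq, not_and]; intro h1 h2; exact h ⟨by omega, by omega⟩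
      · simp only [Prod.mk.injEq, not_and]; intro h1 h2; exact h ⟨by omega, by omega⟩

private lemma adjoint_coord (T : H2 →L[ℂ] H2)
    (hT : ∀ (f : H2) (p q : ℕ), T f (p, q) = if p = 0 then 0 else f (p - 1, q + 1))
    (g : H2) (p q : ℕ) :
    (adjoint T g) (p, q) = if q = 0 then 0 else g (p+1, q-1) := by
  have key : ((adjoint T g) : ∀ _ : ℕ × ℕ, ℂ) (p, q)
      = inner (𝕜 := ℂ) (lp.single 2 (p, q) (1:ℂ)) (adjoint T g) := by
    rw [lp.inner_single_left]; simp
  rw [key, ContinuousLinearMap.adjoint_inner_right]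
  rcases q with _ | q
  · rw [single_zero T hT]; simp
  · rw [single_succ T hT, lp.inner_single_left]; simp

end

/-- The operator on `ℓ²(ℕ × ℕ)` realizing `S ⊗ S*` (the tensor product of the unilateral
shift with its adjoint), i.e. `(T f)(0, q) = 0` and `(T f)(p + 1, q) = f (p, q + 1)`,
is a complex symmetric operator. -/
theorem shift_tensor_backward_shift_complex_symmetric
    (T : lp (fun _ : ℕ × ℕ => ℂ) 2 →L[ℂ] lp (fun _ : ℕ × ℕ => ℂ) 2)
    (hT : ∀ (f : lp (fun _ : ℕ × ℕ => ℂ) 2) (p q : ℕ),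
      T f (p, q) = if p = 0 then 0 else f (p - 1, q + 1)) :
    ∃ C : lp (fun _ : ℕ × ℕ => ℂ) 2 → lp (fun _ : ℕ × ℕ => ℂ) 2,
      IsConjugation C ∧ ∀ f, T f = C (adjoint T (C f)) := by
  refine ⟨Cmap, ⟨?_, Cmap_norm, Cmap_invol⟩, ?_⟩
  · intro a x y
    apply lp.ext; funext z
    simp [lp.coeFn_add, lp.coeFn_smul, Pi.add_apply, Pi.smul_apply, smul_eq_mul]
    change starRingEnd ℂ (a * x z.swap + y z.swap) = starRingEnd ℂ a * starRingEnd ℂ (x z.swap) + starRingEnd ℂ (y z.swap)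
    rw [map_add, map_mul]
  · intro f
    apply lp.ext; funext z
    obtain ⟨p, q⟩ := z
    rw [hT]
    show _ = (starRingEnd ℂ) ((adjoint T (Cmap f)) (q, p))
    rw [adjoint_coord T hT]
    rcases p with _ | p
    · simp
    · simp
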